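/- arXiv:math/0606093 — 2 statements merged into one kernel-verified Lean document; each statement's English description precedes it below -/
import Mathlib

section
/- For any prime p and positive integer α, the binomial coefficient C(p^α, p) is congruent to p^(α−1) modulo p^α. -/
/-- For a prime `p` and `α ≥ 1`, `C(p^α, p) ≡ p^(α-1) (mod p^α)`. -/
theorem choose_prime_pow_congr (p : ℕ) (hp : p.Prime) (α : ℕ) (hα : 1 ≤ α) :
    Nat.choose (p ^ α) p ≡ p ^ (α - 1) [MOD p ^ α] := by
  have hp1 : 1 ≤ p := hp.one_lt.le
  have hpow : 1 ≤ p ^ α := Nat.one_le_pow _ _ hp.pos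
  have key : p ^ α * Nat.choose (p ^ α - 1) (p - 1)
      = Nat.choose (p ^ α) p * p := by
    have h := Nat.add_one_mul_choose_eq (p ^ α - 1) (p - 1)
    have e1 : p ^ α - 1 + 1 = p ^ α := by omega
    have e2 : p - 1 + 1 = p := by omega
    rwa [e1, e2] at h
  have hfact : Nat.choose (p ^ α) p = p ^ (α - 1) * Nat.choose (p ^ α - 1) (p - 1) := by
    have h2 : (p ^ (α - 1) * Nat.choose (p ^ α - 1) (p - 1)) * p
        = Nat.choose (p ^ α) p * p := by
      rw [mul_right_comm, mul_comm (p ^ (α - 1)) p, ← pow_succ', Nat.sub_add_cancel hα, key]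
    exact (Nat.eq_of_mul_eq_mul_right hp.pos h2).symm
  haveI := Fact.mk hp
  have lucas := Choose.choose_modEq_choose_mod_mul_choose_div_nat
    (n := p ^ α - 1) (k := p - 1) (p := p)
  have hmod : (p ^ α - 1) % p = p - 1 := by
    have hsplit : p ^ α - 1 = (p - 1) + p * (p ^ (α - 1) - 1) := by
      have : p ^ α = p * p ^ (α - 1) := by
        rw [← pow_succ', Nat.sub_add_cancel hα]
      have hpw1 : 1 ≤ p ^ (α - 1) := Nat.one_le_pow _ _ hp.pos
      rw [this, Nat.mul_sub, Nat.mul_one]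
      have hle : p ≤ p * p ^ (α - 1) := Nat.le_mul_of_pos_right p hpw1
      omega
    rw [hsplit, Nat.add_mul_mod_self_left, Nat.mod_eq_of_lt (by omega)]
  have hmod2 : (p - 1) % p = p - 1 := Nat.mod_eq_of_lt (by omega)
  have hdiv2 : (p - 1) / p = 0 := Nat.div_eq_of_lt (by omega)
  rw [hmod, hmod2, hdiv2, Nat.choose_self, Nat.choose_zero_right, one_mul] at lucas
  have := Nat.ModEq.mul_left' (c := p ^ (α - 1)) lucas
  rw [mul_one, mul_comm (p ^ (α - 1)) p, ← pow_succ', Nat.sub_add_cancel hα] at this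
  rw [hfact]
  exact this
end

section
/- Let u and v be basic commutators on letters x_1 < ⋯ < x_r in a free group. Then the 'shove' operation [u ← v], defined recursively by: [u ← v] = [v ← u] if v > u; [u ← v] = [[c_1 ← v], c_2] if v < u, u = [c_1, c_2], and c_2 > v; and [u ← v] = [u, v] otherwise, always terminates and produces a basic commutator of weight wt(u) + wt(v). -/
/-- Formal commutators on the letters `x_0 < x_1 < ⋯ < x_{r-1}`. -/
inductive BC (r : ℕ) : Type
  | leaf : Fin r → BC r
  | comm : BC r → BC r → BC r

namespace BC

variable {r : ℕ}

/-- The weight of a formal commutator in the letters. -/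
def wt : BC r → ℕ
  | leaf _ => 1
  | comm a b => wt a + wt b

/-- Size (used for termination). -/
def size : BC r → ℕ
  | leaf _ => 1
  | comm a b => size a + size b + 1

/-- An injective encoding of formal commutators into `ℕ`, used to fix a
definite total order among basic commutators of the same weight. -/
def enc : BC r → ℕ
  | leaf i => Nat.pair 0 i
  | comm a b => Nat.pair 1 (Nat.pair (enc a) (enc b))

/-- The order on formal commutators: first by weight, then by the fixed
encoding within each weight. -/
def lt (a b : BC r) : Prop :=
  wt a < wt b ∨ (wt a = wt b ∧ enc a < enc b)

instance : DecidableRel (lt (r := r)) := fun a b => by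
  unfold lt; infer_instance

theorem lt_asymm' {a b : BC r} (h : lt a b) : ¬ lt b a := by
  rcases h with h | ⟨he, h⟩ <;> rintro (h' | ⟨he', h'⟩) <;> omega

/-- Basic commutators: the letters are basic of weight 1, and `[c₁,c₂]` is
basic when `c₁, c₂` are basic, `c₁ > c₂`, and whenever `c₁ = [a,b]` we have
`b ≤ c₂`. -/
inductive IsBasic : BC r → Prop
  | leaf (i : Fin r) : IsBasic (leaf i)
  | comm {c₁ c₂ : BC r} : IsBasic c₁ → IsBasic c₂ → lt c₂ c₁ →
      (∀ a b, c₁ = BC.comm a b → ¬ lt c₂ b) → IsBasic (BC.comm c₁ c₂)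

/-- The shove operation `[u ← v]`: `[u ← v] = [v ← u]` if `v > u`;
`[u ← v] = [[c₁ ← v], c₂]` if `v < u`, `u = [c₁,c₂]` and `c₂ > v`;
`[u ← v] = [u,v]` otherwise. -/
def shove : BC r → BC r → BC r
  | u, v =>
    if h : lt u v then shove v u
    else
      match u with
      | leaf i => comm (leaf i) v
      | comm c₁ c₂ => if lt v c₂ then comm (shove c₁ v) c₂ else comm (comm c₁ c₂) v
  termination_by u v => (size u + size v, if lt u v then 1 else 0)
  decreasing_by
  · exact Prod.Lex.right' _ (by omega) (by simp [h, lt_asymm' h])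
  · exact Prod.Lex.left _ _ (by simp [size] <;> omega)


theorem wt_pos (a : BC r) : 1 ≤ wt a := by
  induction a with
  | leaf i => simp [wt]
  | comm a b ha hb => simp [wt]; omega

theorem enc_inj : ∀ {a b : BC r}, enc a = enc b → a = b := by
  intro a
  induction a with
  | leaf i =>
    intro b h
    cases b with
    | leaf j =>
      simp only [enc, Nat.pair_eq_pair] at h
      have : i = j := Fin.ext (by exact_mod_cast h.2)
      rw [this]
    | comm c d => simp only [enc, Nat.pair_eq_pair] at h; omega
  | comm a b ha hb =>
    intro c h
    cases c with
    | leaf j => simp only [enc, Nat.pair_eq_pair] at h; omega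
    | comm c d =>
      simp only [enc, Nat.pair_eq_pair] at h
      rw [ha h.2.1, hb h.2.2]

theorem lt_total' {a b : BC r} (h : a ≠ b) : lt a b ∨ lt b a := by
  by_contra hc
  push_neg at hc
  obtain ⟨h1, h2⟩ := hc
  unfold lt at h1 h2
  push_neg at h1 h2
  have hw : wt a = wt b := by omega
  have he : enc a = enc b := by
    have := h1.2 hw
    have := h2.2 hw.symm
    omega
  exact h (enc_inj he)

theorem lt_trans' {a b c : BC r} (h1 : lt a b) (h2 : lt b c) : lt a c := by
  unfold lt at *
  rcases h1 with h1 | ⟨h1, h1'⟩ <;> rcases h2 with h2 | ⟨h2, h2'⟩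
  · left; omega
  · left; omega
  · left; omega
  · right; exact ⟨by omega, by omega⟩

theorem lt_irrefl' {a : BC r} : ¬ lt a a := by
  unfold lt; omega

theorem shove_leaf_eq {i : Fin r} {y : BC r} (h : ¬ lt (leaf i) y) :
    shove (leaf i) y = comm (leaf i) y := by
  rw [shove, dif_neg h]

theorem shove_comm_eq {c₁ c₂ y : BC r} (h : ¬ lt (comm c₁ c₂) y) :
    shove (comm c₁ c₂) y =
      if lt y c₂ then comm (shove c₁ y) c₂ else comm (comm c₁ c₂) y := by
  rw [shove, dif_neg h]

theorem shove_second {x y m : BC r} (hxy : ¬ lt x y) (h1 : ¬ lt m y)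
    (h2 : ∀ a b, x = comm a b → ¬ lt m b) :
    ∀ a b, shove x y = comm a b → ¬ lt m b := by
  intro a b hab
  cases x with
  | leaf i =>
    rw [shove_leaf_eq hxy] at hab
    injection hab with h3 h4
    rw [← h4]; exact h1
  | comm c₁ c₂ =>
    rw [shove_comm_eq hxy] at hab
    by_cases hyc : lt y c₂
    · rw [if_pos hyc] at hab
      injection hab with h3 h4
      rw [← h4]; exact h2 c₁ c₂ rfl
    · rw [if_neg hyc] at hab
      injection hab with h3 h4
      rw [← h4]; exact h1

/-- The shove operation on basic commutators `u ≠ v` terminates (it is a total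
function) and produces a basic commutator of weight `wt u + wt v`. -/
theorem shove_isBasic_wt {r : ℕ} (u v : BC r) (hu : IsBasic u)
    (hv : IsBasic v) (hne : u ≠ v) :
    IsBasic (shove u v) ∧ wt (shove u v) = wt u + wt v := by
  by_cases h : lt u v
  · rw [shove, dif_pos h]
    have := shove_isBasic_wt v u hv hu (Ne.symm hne)
    exact ⟨this.1, by omega⟩
  · have hvu : lt v u := (lt_total' hne).resolve_left h
    cases u with
    | leaf i =>
      rw [shove_leaf_eq h]
      refine ⟨IsBasic.comm hu hv hvu (fun a b hab => by simp at hab), rfl⟩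
    | comm c₁ c₂ =>
      rw [shove_comm_eq h]
      rcases hu with _ | ⟨hc₁, hc₂, hlt, hcond⟩
      by_cases hvc : lt v c₂
      · rw [if_pos hvc]
        have hvc₁ : lt v c₁ := lt_trans' hvc hlt
        have hne' : c₁ ≠ v := fun he => lt_irrefl' (he ▸ hvc₁)
        have IH := shove_isBasic_wt c₁ v hc₁ hv hne'
        have hwlt : lt c₂ (shove c₁ v) := by
          left
          have hp := wt_pos v
          rcases hlt with hw | ⟨hw, _⟩ <;> omega
        refine ⟨IsBasic.comm IH.1 hc₂ hwlt
          (shove_second (lt_asymm' hvc₁) (lt_asymm' hvc) hcond), ?_⟩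
        show wt (shove c₁ v) + wt c₂ = (wt c₁ + wt c₂) + wt v
        omega
      · rw [if_neg hvc]
        refine ⟨IsBasic.comm (IsBasic.comm hc₁ hc₂ hlt hcond) hv hvu
          (fun a b hab => by injection hab with h3 h4; rw [← h4]; exact hvc), rfl⟩
  termination_by (size u + size v, if lt u v then 1 else 0)
  decreasing_by
  · exact Prod.Lex.right' _ (by omega) (by simp [h, lt_asymm' h])
  · exact Prod.Lex.left _ _ (by subst_vars; simp [size] <;> omega)

end BC
end
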